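/- Consider a decoupled model in ℂ⁴ (n = d = 2) with equal degrees D_1 = D_2 = D: P_1(z,w) = Σ_{j=D−k_1}^{k_1} α_j z_1^j w_1^{D−j} with α_j = conj(α_{D−j}), and P_2(z,w) = Σ_{j=D−k_2}^{k_2} β_j z_2^j w_2^{D−j} with β_j = conj(β_{D−j}), where D ≥ 2, D/2 ≤ k_i ≤ D−1, k_0 = max{k_1,k_2}. Then the model is admissible if and only if both hypersurface models {Re w = P_1} ⊂ ℂ² and {Re w = P_2} ⊂ ℂ² are admissible, where the hypersurface {Re w = P_i} is admissible means: there exist c ∈ ℝ, V ∈ ℂ∖{0} and a polynomial q in ζ such that ζ^{k_i}·c·(∂²P_i/∂z_i∂w_i)((1−ζ)V, (1−conj ζ)·conj V) = (1−conj ζ)^{D−2} q(ζ) for all |ζ| = 1 and q(ζ) ≠ 0 for all |ζ| = 1. -/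

import Mathlib

open ComplexConjugate

noncomputable section

/-- The decoupled polynomial `Σ_{j=D−k}^{k} γ_j z_i^j w_i^{D−j}` in the variables
`z = X ∘ Sum.inl`, `w = X ∘ Sum.inr` (case `n = 2`), using only the `i`-th pair. -/
def decP (D k : ℕ) (γ : ℕ → ℂ) (i : Fin 2) : MvPolynomial (Fin 2 ⊕ Fin 2) ℂ :=
  ∑ j ∈ Finset.Icc (D - k) k,
    MvPolynomial.C (γ j) * MvPolynomial.X (Sum.inl i) ^ j *
      MvPolynomial.X (Sum.inr i) ^ (D - j)

/-- Admissibility of the decoupled model `{Re w₁ = P₁, Re w₂ = P₂} ⊂ ℂ⁴`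
(with `D₁ = D₂ = D` and `k₀ = max k₁ k₂`). -/
def ModelAdmissible (D k1 k2 : ℕ) (α β : ℕ → ℂ) : Prop :=
  ∃ (c : Fin 2 → ℝ) (V : Fin 2 → ℂ), V ≠ 0 ∧
    ∃ Q : Fin 2 → Fin 2 → Polynomial ℂ,
      ∀ ζ : ℂ, ‖ζ‖ = 1 →
        (∀ i j : Fin 2,
          ζ ^ (max k1 k2) * ∑ ℓ : Fin 2, (c ℓ : ℂ) *
              MvPolynomial.eval
                (Sum.elim (fun p => (1 - ζ) * V p)
                  (fun p => (1 - conj ζ) * conj (V p)))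
                (MvPolynomial.pderiv (Sum.inl i)
                  (MvPolynomial.pderiv (Sum.inr j)
                    (![decP D k1 α 0, decP D k2 β 1] ℓ)))
            = (1 - conj ζ) ^ (D - 2) * (Q i j).eval ζ) ∧
        IsUnit (Matrix.of fun i j : Fin 2 => (Q i j).eval ζ)

/-- Admissibility of the hypersurface model `{Re w = P_i} ⊂ ℂ²`, where `P_i` only
involves the `i`-th pair of variables. -/
def HypAdmissible (D ki : ℕ) (Pi : MvPolynomial (Fin 2 ⊕ Fin 2) ℂ) (i : Fin 2) : Prop :=
  ∃ (c : ℝ) (v : ℂ), v ≠ 0 ∧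
    ∃ q : Polynomial ℂ,
      ∀ ζ : ℂ, ‖ζ‖ = 1 →
        ζ ^ ki * (c : ℂ) *
            MvPolynomial.eval
              (Sum.elim (fun _ => (1 - ζ) * v) (fun _ => (1 - conj ζ) * conj v))
              (MvPolynomial.pderiv (Sum.inl i) (MvPolynomial.pderiv (Sum.inr i) Pi))
          = (1 - conj ζ) ^ (D - 2) * q.eval ζ ∧ q.eval ζ ≠ 0

/-! ### Auxiliary machinery -/

/-- The value of the mixed second derivative of `P_i` at the relevant point. -/
def Eex (D k : ℕ) (γ : ℕ → ℂ) (v ζ : ℂ) : ℂ :=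
  ∑ m ∈ Finset.Icc (D-k) k,
    γ m * m * (D-m : ℕ) * ((1-ζ)*v)^(m-1) * ((1-conj ζ)*conj v)^(D-m-1)

open MvPolynomial in
lemma eval_pd (D k : ℕ) (γ : ℕ → ℂ) (l i j : Fin 2) (x y : Fin 2 → ℂ) :
    MvPolynomial.eval (Sum.elim x y) (pderiv (Sum.inl i) (pderiv (Sum.inr j) (decP D k γ l))) =
    if i = l ∧ j = l then
      ∑ m ∈ Finset.Icc (D-k) k, γ m * m * (D-m : ℕ) * (x l)^(m-1) * (y l)^(D-m-1) else 0 := by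
  unfold decP
  rw [map_sum, map_sum, map_sum]
  by_cases hi : i = l <;> by_cases hj : j = l <;>
    simp [hi, hj, pderiv_mul, pderiv_pow, pderiv_X_self, pderiv_X_of_ne, Finset.sum_ite,
      mul_comm, mul_assoc, mul_left_comm]

open MvPolynomial in
lemma eval_pd_model (D k : ℕ) (γ : ℕ → ℂ) (l i j : Fin 2) (ζ : ℂ) (V : Fin 2 → ℂ) :
    MvPolynomial.eval (Sum.elim (fun p => (1 - ζ) * V p) (fun p => (1 - conj ζ) * conj (V p)))
      (pderiv (Sum.inl i) (pderiv (Sum.inr j) (decP D k γ l))) =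
    if i = l ∧ j = l then Eex D k γ (V l) ζ else 0 := by
  rw [eval_pd]; rfl

open MvPolynomial in
lemma eval_pd_hyp (D k : ℕ) (γ : ℕ → ℂ) (l i j : Fin 2) (ζ v : ℂ) :
    MvPolynomial.eval (Sum.elim (fun _ => (1 - ζ) * v) (fun _ => (1 - conj ζ) * conj v))
      (pderiv (Sum.inl i) (pderiv (Sum.inr j) (decP D k γ l))) =
    if i = l ∧ j = l then Eex D k γ v ζ else 0 := by
  rw [eval_pd]; rfl

lemma mul_conj_one {ζ : ℂ} (hζ : ‖ζ‖ = 1) : ζ * conj ζ = 1 := by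
  rw [Complex.mul_conj, Complex.normSq_eq_norm_sq, hζ]; norm_num

lemma keylem (D k : ℕ) (hD : 2 ≤ D) (hk' : k ≤ D-1) (γ : ℕ → ℂ) (c v : ℂ) :
    ∃ q : Polynomial ℂ, ∀ ζ : ℂ, ‖ζ‖ = 1 →
      ζ^k * c * Eex D k γ v ζ = (1 - conj ζ)^(D-2) * q.eval ζ := by
  refine ⟨∑ m ∈ Finset.Icc (D-k) k,
    Polynomial.C (c * (γ m * m * (D-m : ℕ) * v^(m-1) * (conj v)^(D-m-1) * (-1)^(m-1))) *
      Polynomial.X ^ (k+m-1), fun ζ hζ => ?_⟩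
  have hmc := mul_conj_one hζ
  have h1ζ : (1 : ℂ) - ζ = -ζ * (1 - conj ζ) := by linear_combination -hmc
  rw [Eex, Polynomial.eval_finset_sum]
  simp only [Finset.mul_sum, Polynomial.eval_mul, Polynomial.eval_C, Polynomial.eval_pow,
    Polynomial.eval_X]
  refine Finset.sum_congr rfl fun m hm => ?_
  simp only [Finset.mem_Icc] at hm
  obtain ⟨a, rfl⟩ : ∃ a, m = a + 1 := ⟨m - 1, by omega⟩
  obtain ⟨b, hb1, hb2⟩ : ∃ b, D - (a+1) - 1 = b ∧ D - 2 = a + b :=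
    ⟨D - a - 2, by omega, by omega⟩
  have e1 : (a + 1) - 1 = a := by omega
  have e4 : k + (a+1) - 1 = k + a := by omega
  rw [e1, hb1, hb2, e4, h1ζ, mul_pow, mul_pow, neg_pow, mul_pow]
  ring

def gn (n : ℕ) : ℂ := (1 + (n+1 : ℕ) * Complex.I) / (1 - (n+1 : ℕ) * Complex.I)

lemma gden_ne (n : ℕ) : (1 : ℂ) - (n+1 : ℕ) * Complex.I ≠ 0 := by
  intro h; have := congrArg Complex.re h; simp at this

lemma gnum_ne (n : ℕ) : (1 : ℂ) + (n+1 : ℕ) * Complex.I ≠ 0 := by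
  intro h; have := congrArg Complex.re h; simp at this

lemma gn_norm (n : ℕ) : ‖gn n‖ = 1 := by
  have hc : conj ((1 : ℂ) + (n+1 : ℕ) * Complex.I) = 1 - (n+1 : ℕ) * Complex.I := by
    simp [map_add, map_mul, Complex.conj_I]; ring
  rw [gn, norm_div, ← hc, RCLike.norm_conj, div_self (norm_ne_zero_iff.2 (gnum_ne n))]

lemma gn_ne_one (n : ℕ) : gn n ≠ 1 := by
  intro h
  rw [gn, div_eq_iff (gden_ne n), one_mul] at h
  have h2 := congrArg Complex.im h
  simp at h2
  have : (0:ℝ) ≤ (n:ℝ) := Nat.cast_nonneg n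
  linarith

lemma gn_inj : Function.Injective gn := by
  intro a b h
  rw [gn, gn, div_eq_div_iff (gden_ne a) (gden_ne b)] at h
  push_cast at h
  have h2 : ((a:ℂ) - b) * (2 * Complex.I) = 0 := by linear_combination h
  have h3 : (a:ℂ) = b := by
    rcases mul_eq_zero.1 h2 with h | h
    · linear_combination h
    · norm_num [Complex.ext_iff] at h
  exact_mod_cast h3

lemma circle_ne_one_infinite : Set.Infinite {z : ℂ | ‖z‖ = 1 ∧ z ≠ 1} :=
  Set.infinite_of_injective_forall_mem (f := gn) gn_inj fun n => ⟨gn_norm n, gn_ne_one n⟩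

lemma poly_eq_of_circle (p q : Polynomial ℂ)
    (h : ∀ ζ : ℂ, ‖ζ‖ = 1 → ζ ≠ 1 → p.eval ζ = q.eval ζ) : p = q := by
  refine Polynomial.eq_of_infinite_eval_eq p q (circle_ne_one_infinite.mono ?_)
  rintro z ⟨h1, h2⟩
  exact h z h1 h2

lemma one_sub_conj_ne {z : ℂ} (h : z ≠ 1) : (1:ℂ) - conj z ≠ 0 := by
  rw [sub_ne_zero]
  intro h'
  exact h (by simpa using congrArg conj h'.symm)

lemma Eex_zero (D k : ℕ) (hD3 : 3 ≤ D) (γ : ℕ → ℂ) (ζ : ℂ) : Eex D k γ 0 ζ = 0 := by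
  refine Finset.sum_eq_zero fun m hm => ?_
  simp only [Finset.mem_Icc] at hm
  rw [mul_zero, map_zero, mul_zero]
  by_cases h : m - 1 = 0
  · have h2 : D - m - 1 ≠ 0 := by omega
    rw [zero_pow h2, mul_zero]
  · rw [zero_pow h, mul_zero, zero_mul]

lemma Eex_indep (γ : ℕ → ℂ) (v w ζ : ℂ) : Eex 2 1 γ v ζ = Eex 2 1 γ w ζ := by
  simp [Eex]

lemma forward_transfer (D k k0 : ℕ) (hD : 2 ≤ D) (hk : D ≤ 2*k) (hk' : k ≤ D-1)
    (hkk0 : k ≤ k0) (γ : ℕ → ℂ) (c : ℝ) (v : ℂ) (Q0 : Polynomial ℂ)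
    (hmodel : ∀ ζ : ℂ, ‖ζ‖ = 1 →
      ζ^k0 * ((c:ℂ) * Eex D k γ v ζ) = (1-conj ζ)^(D-2) * Q0.eval ζ)
    (hQ0 : ∀ ζ : ℂ, ‖ζ‖ = 1 → Q0.eval ζ ≠ 0) :
    ∃ (c' : ℝ) (v' : ℂ), v' ≠ 0 ∧ ∃ q : Polynomial ℂ, ∀ ζ : ℂ, ‖ζ‖ = 1 →
      (ζ^k * (c':ℂ) * Eex D k γ v' ζ = (1-conj ζ)^(D-2) * q.eval ζ ∧ q.eval ζ ≠ 0) := by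
  obtain ⟨v', hv', hEE⟩ : ∃ v', v' ≠ 0 ∧ ∀ ζ : ℂ, Eex D k γ v ζ = Eex D k γ v' ζ := by
    by_cases hv : v = 0
    · by_cases hD3 : 3 ≤ D
      · exfalso
        have h1 := hmodel (gn 0) (gn_norm 0)
        rw [hv, Eex_zero D k hD3 γ _, mul_zero, mul_zero] at h1
        have hne : ((1:ℂ) - conj (gn 0))^(D-2) ≠ 0 :=
          pow_ne_zero _ (one_sub_conj_ne (gn_ne_one 0))
        exact hQ0 (gn 0) (gn_norm 0) ((mul_eq_zero.1 h1.symm).resolve_left hne)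
      · have hD2 : D = 2 := by omega
        have hk1 : k = 1 := by omega
        subst hD2; subst hk1
        exact ⟨1, one_ne_zero, fun ζ => Eex_indep γ v 1 ζ⟩
    · exact ⟨v, hv, fun _ => rfl⟩
  obtain ⟨q, hq⟩ := keylem D k hD hk' γ c v'
  refine ⟨c, v', hv', q, fun ζ hζ => ⟨hq ζ hζ, ?_⟩⟩
  have hpoly : Q0 = Polynomial.X^(k0-k) * q := by
    apply poly_eq_of_circle
    intro z hz hz1
    have hne : ((1:ℂ) - conj z)^(D-2) ≠ 0 := pow_ne_zero _ (one_sub_conj_ne hz1)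
    have e1 := hmodel z hz
    have e2 := hq z hz
    rw [hEE z] at e1
    have e3 : z^k0 = z^(k0-k) * z^k := by rw [← pow_add]; congr 1; omega
    apply mul_left_cancel₀ hne
    rw [Polynomial.eval_mul, Polynomial.eval_pow, Polynomial.eval_X]
    calc ((1:ℂ)-conj z)^(D-2) * Q0.eval z = z^k0 * ((c:ℂ) * Eex D k γ v' z) := e1.symm
    _ = z^(k0-k) * (z^k * (c:ℂ) * Eex D k γ v' z) := by rw [e3]; ring
    _ = z^(k0-k) * (((1:ℂ)-conj z)^(D-2) * q.eval z) := by rw [e2]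
    _ = ((1:ℂ)-conj z)^(D-2) * (z^(k0-k) * q.eval z) := by ring
  intro h0
  apply hQ0 ζ hζ
  rw [hpoly, Polynomial.eval_mul, h0, mul_zero]

theorem stmt9 (D k1 k2 : ℕ) (hD : 2 ≤ D)
    (hk1 : D ≤ 2 * k1) (hk1' : k1 ≤ D - 1)
    (hk2 : D ≤ 2 * k2) (hk2' : k2 ≤ D - 1)
    (α β : ℕ → ℂ)
    (hα : ∀ j, D - k1 ≤ j → j ≤ k1 → α j = conj (α (D - j)))
    (hβ : ∀ j, D - k2 ≤ j → j ≤ k2 → β j = conj (β (D - j))) :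
    ModelAdmissible D k1 k2 α β ↔
      (HypAdmissible D k1 (decP D k1 α 0) 0 ∧ HypAdmissible D k2 (decP D k2 β 1) 1) := by
  constructor
  · rintro ⟨c, V, hV, Q, hQ⟩
    -- off-diagonal polys vanish
    have hQ01 : Q 0 1 = 0 := by
      apply poly_eq_of_circle
      intro z hz hz1
      have h := (hQ z hz).1 0 1
      simp only [Fin.sum_univ_two, Matrix.cons_val_zero, Matrix.cons_val_one, Matrix.head_cons,
        eval_pd_model] at h
      norm_num at h
      rw [Polynomial.eval_zero]
      rcases h with ⟨h, -⟩ | h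
      · exact absurd h (one_sub_conj_ne hz1)
      · exact h
    have hQ10 : Q 1 0 = 0 := by
      apply poly_eq_of_circle
      intro z hz hz1
      have h := (hQ z hz).1 1 0
      simp only [Fin.sum_univ_two, Matrix.cons_val_zero, Matrix.cons_val_one, Matrix.head_cons,
        eval_pd_model] at h
      norm_num at h
      rw [Polynomial.eval_zero]
      rcases h with ⟨h, -⟩ | h
      · exact absurd h (one_sub_conj_ne hz1)
      · exact h
    have hdet : ∀ ζ : ℂ, ‖ζ‖ = 1 → (Q 0 0).eval ζ ≠ 0 ∧ (Q 1 1).eval ζ ≠ 0 := by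
      intro ζ hζ
      have h := (hQ ζ hζ).2
      rw [Matrix.isUnit_iff_isUnit_det, Matrix.det_fin_two] at h
      simp only [Matrix.of_apply, hQ01, hQ10, Polynomial.eval_zero, mul_zero, zero_mul,
        sub_zero] at h
      rw [isUnit_iff_ne_zero] at h
      exact ⟨left_ne_zero_of_mul h, right_ne_zero_of_mul h⟩
    constructor
    · have hmodel : ∀ ζ : ℂ, ‖ζ‖ = 1 →
          ζ^(max k1 k2) * ((c 0 : ℂ) * Eex D k1 α (V 0) ζ)
            = (1-conj ζ)^(D-2) * (Q 0 0).eval ζ := by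
        intro ζ hζ
        have h := (hQ ζ hζ).1 0 0
        simp only [Fin.sum_univ_two, Matrix.cons_val_zero, Matrix.cons_val_one, Matrix.head_cons,
          eval_pd_model] at h
        norm_num at h
        convert h using 2
      obtain ⟨c', v', hv', q, hq⟩ := forward_transfer D k1 (max k1 k2) hD hk1 hk1'
        (le_max_left _ _) α (c 0) (V 0) (Q 0 0) hmodel (fun ζ hζ => (hdet ζ hζ).1)
      refine ⟨c', v', hv', q, fun ζ hζ => ?_⟩
      rw [eval_pd_hyp]
      norm_num
      exact hq ζ hζ
    · have hmodel : ∀ ζ : ℂ, ‖ζ‖ = 1 →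
          ζ^(max k1 k2) * ((c 1 : ℂ) * Eex D k2 β (V 1) ζ)
            = (1-conj ζ)^(D-2) * (Q 1 1).eval ζ := by
        intro ζ hζ
        have h := (hQ ζ hζ).1 1 1
        simp only [Fin.sum_univ_two, Matrix.cons_val_zero, Matrix.cons_val_one, Matrix.head_cons,
          eval_pd_model] at h
        norm_num at h
        convert h using 2
      obtain ⟨c', v', hv', q, hq⟩ := forward_transfer D k2 (max k1 k2) hD hk2 hk2'
        (le_max_right _ _) β (c 1) (V 1) (Q 1 1) hmodel (fun ζ hζ => (hdet ζ hζ).2)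
      refine ⟨c', v', hv', q, fun ζ hζ => ?_⟩
      rw [eval_pd_hyp]
      norm_num
      exact hq ζ hζ
  · rintro ⟨⟨c1, v1, hv1, q1, h1⟩, ⟨c2, v2, hv2, q2, h2⟩⟩
    have h1' : ∀ ζ : ℂ, ‖ζ‖ = 1 →
        ζ^k1 * (c1:ℂ) * Eex D k1 α v1 ζ = (1-conj ζ)^(D-2) * q1.eval ζ ∧ q1.eval ζ ≠ 0 := by
      intro ζ hζ
      have h := h1 ζ hζ
      rw [eval_pd_hyp] at h
      norm_num at h
      exact h
    have h2' : ∀ ζ : ℂ, ‖ζ‖ = 1 →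
        ζ^k2 * (c2:ℂ) * Eex D k2 β v2 ζ = (1-conj ζ)^(D-2) * q2.eval ζ ∧ q2.eval ζ ≠ 0 := by
      intro ζ hζ
      have h := h2 ζ hζ
      rw [eval_pd_hyp] at h
      norm_num at h
      exact h
    refine ⟨![c1, c2], ![v1, v2], ?_,
      ![![Polynomial.X^(max k1 k2 - k1) * q1, 0], ![0, Polynomial.X^(max k1 k2 - k2) * q2]],
      fun ζ hζ => ⟨?_, ?_⟩⟩
    · intro h
      apply hv1
      have := congrFun h 0
      simpa using this
    · intro i j
      have hζ0 : ζ ≠ 0 := fun h => by rw [h] at hζ; simp at hζ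
      have e1 : ζ^(max k1 k2) = ζ^(max k1 k2 - k1) * ζ^k1 := by
        rw [← pow_add]; congr 1; omega
      have e2 : ζ^(max k1 k2) = ζ^(max k1 k2 - k2) * ζ^k2 := by
        rw [← pow_add]; congr 1; omega
      fin_cases i <;> fin_cases j <;>
        simp only [Fin.sum_univ_two, Matrix.cons_val_zero, Matrix.cons_val_one, Matrix.head_cons,
          eval_pd_model] <;> norm_num
      · rw [e1]
        linear_combination (ζ^(k1 ⊔ k2 - k1)) * (h1' ζ hζ).1
      · rw [e2]
        linear_combination (ζ^(k1 ⊔ k2 - k2)) * (h2' ζ hζ).1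
    · rw [Matrix.isUnit_iff_isUnit_det, Matrix.det_fin_two]
      simp only [Matrix.of_apply, Matrix.cons_val_zero, Matrix.cons_val_one, Matrix.head_cons,
        Polynomial.eval_zero, mul_zero, sub_zero, Polynomial.eval_mul, Polynomial.eval_pow,
        Polynomial.eval_X]
      have hζ0 : ζ ≠ 0 := fun h => by rw [h] at hζ; simp at hζ
      rw [isUnit_iff_ne_zero]
      exact mul_ne_zero (mul_ne_zero (pow_ne_zero _ hζ0) (h1' ζ hζ).2)
        (mul_ne_zero (pow_ne_zero _ hζ0) (h2' ζ hζ).2)
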